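/- With UQ, UP, e₀, e₇ as in the context, one has the identity (α³·γ⁻¹·q⁻⁷·s⁻¹) · (UP − qsγβ·1₈) · (UQ − q²α·1₈) · (UQ − q²β·1₈) · (UQ − q²β⁻¹·1₈) · e₀ = (α + 1)(1 − αq⁻¹)(1 − βq⁻¹)(1 − γ²α²q⁻¹)(1 − γ⁻²q⁻¹) · e₇ in F⁸, where 1₈ is the 8×8 identity matrix. (Here q^{15/2} = q⁷s; this is the identity φ♭ = (α+1)·φ‡ of Proposition 7.6(3) of Hsieh–Yamana, comparing the two stabilizations of the spherical vector.) -/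

import Mathlib

open Matrix


private lemma mycons_eq {F : Type*} {n : ℕ} {a b : F} {u v : Fin n → F} :
    Matrix.vecCons a u = Matrix.vecCons b v ↔ a = b ∧ u = v := Fin.cons_inj

set_option maxHeartbeats 4000000 in
/-- The identity `φ♭ = (α+1)·φ‡` of Proposition 7.6(3) of Hsieh–Yamana,
comparing the two stabilizations of the spherical vector. -/
theorem hsieh_yamana_flat_stabilization_identity
    {F : Type*} [Field F] (q s α β γ : F)
    (hq : q ≠ 0) (hs0 : s ≠ 0) (hα : α ≠ 0) (hβ : β ≠ 0) (hγ : γ ≠ 0)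
    (hsq : s ^ 2 = q) (habg : α * β * γ ^ 2 = 1)
    (UQ UP : Matrix (Fin 8) (Fin 8) F)
    (hUQ : UQ = !![q^2*α, 0, 0, 0, 0, 0, 0, 0;
                   α*q*(q-1), q^2*β, 0, 0, 0, 0, 0, 0;
                   0, 0, q^2*α, 0, 0, 0, 0, 0;
                   0, q*(q-1)*(β+1), α*q*(q-1), q^2*β⁻¹, 0, 0, 0, 0;
                   (α+1)*(q-1), (q-1)^2, α*(q-1)^2, (q^2-q)*β⁻¹, q^2*α⁻¹, β*q*(q-1), 0, 0;
                   0, 0, α*q*(q-1), 0, 0, q^2*β, 0, 0;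
                   α*q⁻¹*(q-1)^2, β*(q-1), (q-1)*(α*(q-1+q⁻¹)+1), 0, 0, (q-1)^2*(β+1), q^2*α⁻¹, (q^2-q)*β⁻¹;
                   α*(q-1), 0, α*(q-1)^2, 0, 0, q*(q-1)*(β+1), 0, q^2*β⁻¹])
    (hUP : UP = !![q*s*γ⁻¹, 0, 0, 0, 0, 0, 0, 0;
                   0, q*s*γ⁻¹, 0, 0, 0, 0, 0, 0;
                   s*(q-1)*γ⁻¹, 0, α*γ*q*s, 0, 0, 0, 0, 0;
                   0, s*(q-1)*γ⁻¹, 0, α*γ*q*s, 0, 0, 0, 0;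
                   (q-1)*γ⁻¹*s⁻¹, (q-1)^2*γ⁻¹*s⁻¹, 0, α*γ*s*(q-1), β*γ*q*s, 0, 0, 0;
                   0, s*(q-1)*γ⁻¹, s*(q-1)*γ⁻¹*β⁻¹, 0, 0, β*γ*q*s, 0, 0;
                   (q-1)^2*γ⁻¹*q⁻¹*s⁻¹, (q^3-2*q^2+2*q-1)*γ⁻¹*q⁻¹*s⁻¹, α*γ*(q-1)*s⁻¹, α*γ*(q-1)^2*s⁻¹, β*γ*s*(q-1), 0, γ*q*s, 0;
                   (q-1)*γ⁻¹*s⁻¹, (q-1)^2*γ⁻¹*s⁻¹, 0, α*γ*s*(q-1), 0, s*(q-1)*γ⁻¹*α⁻¹, 0, γ*q*s]) :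
    (α^3 * γ⁻¹ * q⁻¹^7 * s⁻¹) •
        (((UP - (q*s*γ*β) • (1 : Matrix (Fin 8) (Fin 8) F)) *
          (UQ - (q^2*α) • (1 : Matrix (Fin 8) (Fin 8) F)) *
          (UQ - (q^2*β) • (1 : Matrix (Fin 8) (Fin 8) F)) *
          (UQ - (q^2*β⁻¹) • (1 : Matrix (Fin 8) (Fin 8) F))) *ᵥ
            ![1, 1, 1, 1, 1, 1, 1, 1]) =
      ((α + 1) * (1 - α*q⁻¹) * (1 - β*q⁻¹) * (1 - γ^2*α^2*q⁻¹) * (1 - γ⁻¹^2*q⁻¹)) •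
        ![0, 0, 0, 0, 0, 0, 1, 0] := by
  have hb : β = α⁻¹ * γ⁻¹ ^ 2 := by
    field_simp
    linear_combination habg
  subst hb
  subst hsq
  obtain ⟨si, hsi, hsi1⟩ : ∃ t, s * t = 1 ∧ s⁻¹ = t := ⟨s⁻¹, mul_inv_cancel₀ hs0, rfl⟩
  obtain ⟨ai, hai, hai1⟩ : ∃ t, α * t = 1 ∧ α⁻¹ = t := ⟨α⁻¹, mul_inv_cancel₀ hα, rfl⟩
  obtain ⟨gi, hgi, hgi1⟩ : ∃ t, γ * t = 1 ∧ γ⁻¹ = t := ⟨γ⁻¹, mul_inv_cancel₀ hγ, rfl⟩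
  have hsi2 : (s ^ 2)⁻¹ = si ^ 2 := by rw [← hsi1]; exact (inv_pow s 2).symm
  have habi : (α⁻¹ * γ⁻¹ ^ 2)⁻¹ = α * γ ^ 2 := by rw [mul_inv, inv_inv, inv_pow, inv_inv]
  have habi2 : (ai * gi ^ 2)⁻¹ = α * γ ^ 2 := by rw [← hai1, ← hgi1, habi]
  have h1 : (UQ - ((s^2)^2*(α⁻¹ * γ⁻¹ ^ 2)⁻¹) • (1 : Matrix (Fin 8) (Fin 8) F)) *ᵥ ![1, 1, 1, 1, 1, 1, 1, 1] =
      ![s^4*α - s^4*α*γ^2,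
        - s^2*α + s^4*ai*gi^2 + s^4*α - s^4*α*γ^2,
        s^4*α - s^4*α*γ^2,
        - s^2 - s^2*ai*gi^2 - s^2*α + s^4 + s^4*ai*gi^2 + s^4*α,
        - s^2 - s^2*ai*gi^2 - s^2*α - s^2*α*γ^2 + s^4 + s^4*ai + s^4*ai*gi^2 + s^4*α,
        - s^2*α + s^4*ai*gi^2 + s^4*α - s^4*α*γ^2,
        - s^2 - s^2*ai*gi^2 - s^2*α - s^2*α*γ^2 + s^4 + s^4*ai + s^4*ai*gi^2 + s^4*α,
        - s^2 - s^2*ai*gi^2 - s^2*α + s^4 + s^4*ai*gi^2 + s^4*α] := by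
    rw [Matrix.sub_mulVec, Matrix.smul_mulVec, Matrix.one_mulVec, hUQ]
    simp only [Matrix.cons_mulVec, Matrix.cons_dotProduct, Matrix.head_cons, Matrix.tail_cons, Matrix.dotProduct_of_isEmpty, Matrix.empty_mulVec, Matrix.smul_cons, Matrix.smul_empty, smul_eq_mul, Matrix.cons_sub_cons, Matrix.empty_sub_empty, hsi1, hsi2, hai1, hgi1, habi, habi2, mycons_eq, eq_self_iff_true, and_true]
    refine ⟨?_, ?_, ?_, ?_, ?_, ?_, ?_, ?_⟩
    · linear_combination (0:F) * hsi
    · linear_combination (0:F) * hsi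
    · linear_combination (0:F) * hsi
    · linear_combination (0:F) * hsi
    · linear_combination (0:F) * hsi
    · linear_combination (0:F) * hsi
    · linear_combination (- α - s*α*si + s^2*α + s^3*α*si) * hsi
    · linear_combination (0:F) * hsi
  have h2 : (UQ - ((s^2)^2*(α⁻¹ * γ⁻¹ ^ 2)) • (1 : Matrix (Fin 8) (Fin 8) F)) *ᵥ ![s^4*α - s^4*α*γ^2,
        - s^2*α + s^4*ai*gi^2 + s^4*α - s^4*α*γ^2,
        s^4*α - s^4*α*γ^2,
        - s^2 - s^2*ai*gi^2 - s^2*α + s^4 + s^4*ai*gi^2 + s^4*α,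
        - s^2 - s^2*ai*gi^2 - s^2*α - s^2*α*γ^2 + s^4 + s^4*ai + s^4*ai*gi^2 + s^4*α,
        - s^2*α + s^4*ai*gi^2 + s^4*α - s^4*α*γ^2,
        - s^2 - s^2*ai*gi^2 - s^2*α - s^2*α*γ^2 + s^4 + s^4*ai + s^4*ai*gi^2 + s^4*α,
        - s^2 - s^2*ai*gi^2 - s^2*α + s^4 + s^4*ai*gi^2 + s^4*α] =
      ![s^8 - s^8*gi^2 + s^8*α^2 - s^8*α^2*γ^2,
        - s^6*α^2 + s^6*α^2*γ^2 + s^8*α^2 - s^8*α^2*γ^2,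
        s^8 - s^8*gi^2 + s^8*α^2 - s^8*α^2*γ^2,
        s^4*gi^2 + s^4*α - s^6*gi^2 - 2*s^6*α - s^6*α^2 + s^8*α + s^8*α^2,
        - s^2*α + s^4 + s^4*gi^2 + s^4*ai*gi^2 + 2*s^4*α + s^4*α*γ^2 + s^4*α^2*γ^2 - s^6 - s^6*gi^2 - s^6*ai - s^6*ai*gi^2 - s^6*ai^2*gi^2 - s^6*γ^2 - 2*s^6*α - s^6*α*γ^2 - s^6*α^2 - s^6*α^2*γ^2 + s^8 + s^8*ai + s^8*ai^2 + s^8*α + s^8*α^2,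
        - s^6*α^2 + s^6*α^2*γ^2 + s^8*α^2 - s^8*α^2*γ^2,
        - s^2*α + s^4 + s^4*gi^2 + s^4*ai*gi^2 + 2*s^4*α + s^4*α*γ^2 + s^4*α^2*γ^2 - s^6 - s^6*gi^2 - s^6*ai - s^6*ai*gi^2 - s^6*ai^2*gi^2 - s^6*γ^2 - 2*s^6*α - s^6*α*γ^2 - s^6*α^2 - s^6*α^2*γ^2 + s^8 + s^8*ai + s^8*ai^2 + s^8*α + s^8*α^2,
        s^4*gi^2 + s^4*α - s^6*gi^2 - 2*s^6*α - s^6*α^2 + s^8*α + s^8*α^2] := by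
    rw [Matrix.sub_mulVec, Matrix.smul_mulVec, Matrix.one_mulVec, hUQ]
    simp only [Matrix.cons_mulVec, Matrix.cons_dotProduct, Matrix.head_cons, Matrix.tail_cons, Matrix.dotProduct_of_isEmpty, Matrix.empty_mulVec, Matrix.smul_cons, Matrix.smul_empty, smul_eq_mul, Matrix.cons_sub_cons, Matrix.empty_sub_empty, hsi1, hsi2, hai1, hgi1, habi, habi2, mycons_eq, eq_self_iff_true, and_true]
    refine ⟨?_, ?_, ?_, ?_, ?_, ?_, ?_, ?_⟩
    · linear_combination (- s^8*gi^2 + s^8*γ^2*gi^2) * hai + (s^8 + s^8*γ*gi) * hgi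
    · linear_combination (0:F) * hsi
    · linear_combination (- s^8*gi^2 + s^8*γ^2*gi^2) * hai + (s^8 + s^8*γ*gi) * hgi
    · linear_combination (s^4*gi^2 - s^6*gi^2) * hai
    · linear_combination (s^4*gi^2 + s^4*γ^2*gi^2 - s^6 - s^6*gi^2 - s^6*γ^2 + s^8) * hai + (s^4 + s^4*γ*gi) * hgi
    · linear_combination (0:F) * hsi
    · linear_combination (- s^4*α^2 + s^4*α^2*γ^2 - s^5*α^2*si + s^5*α^2*γ^2*si + s^6*α^2 - s^6*α^2*γ^2 + s^7*α^2*si - s^7*α^2*γ^2*si) * hsi + (s^4*gi^2 + s^4*γ^2*gi^2 - s^6 - s^6*gi^2 - s^6*γ^2 + s^8) * hai + (s^4 + s^4*γ*gi) * hgi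
    · linear_combination (s^4*gi^2 - s^6*gi^2) * hai
  have h3 : (UQ - ((s^2)^2*α) • (1 : Matrix (Fin 8) (Fin 8) F)) *ᵥ ![s^8 - s^8*gi^2 + s^8*α^2 - s^8*α^2*γ^2,
        - s^6*α^2 + s^6*α^2*γ^2 + s^8*α^2 - s^8*α^2*γ^2,
        s^8 - s^8*gi^2 + s^8*α^2 - s^8*α^2*γ^2,
        s^4*gi^2 + s^4*α - s^6*gi^2 - 2*s^6*α - s^6*α^2 + s^8*α + s^8*α^2,
        - s^2*α + s^4 + s^4*gi^2 + s^4*ai*gi^2 + 2*s^4*α + s^4*α*γ^2 + s^4*α^2*γ^2 - s^6 - s^6*gi^2 - s^6*ai - s^6*ai*gi^2 - s^6*ai^2*gi^2 - s^6*γ^2 - 2*s^6*α - s^6*α*γ^2 - s^6*α^2 - s^6*α^2*γ^2 + s^8 + s^8*ai + s^8*ai^2 + s^8*α + s^8*α^2,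
        - s^6*α^2 + s^6*α^2*γ^2 + s^8*α^2 - s^8*α^2*γ^2,
        - s^2*α + s^4 + s^4*gi^2 + s^4*ai*gi^2 + 2*s^4*α + s^4*α*γ^2 + s^4*α^2*γ^2 - s^6 - s^6*gi^2 - s^6*ai - s^6*ai*gi^2 - s^6*ai^2*gi^2 - s^6*γ^2 - 2*s^6*α - s^6*α*γ^2 - s^6*α^2 - s^6*α^2*γ^2 + s^8 + s^8*ai + s^8*ai^2 + s^8*α + s^8*α^2,
        s^4*gi^2 + s^4*α - s^6*gi^2 - 2*s^6*α - s^6*α^2 + s^8*α + s^8*α^2] =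
      ![0,
        0,
        0,
        0,
        - s^6 - s^6*α + s^8 + s^8*ai + s^8*ai*gi^2 + s^8*ai^2*gi^2 + s^8*γ^2 + s^8*α*γ^2 - s^10*ai - s^10*ai^2 - s^10*ai^2*gi^2 - s^10*ai^3*gi^2 - s^10*γ^2 - s^10*γ^2*ai + s^12*ai^2 + s^12*ai^3,
        0,
        - s^6 - s^6*α + s^8 + s^8*ai + s^8*ai*gi^2 + s^8*ai^2*gi^2 + s^8*γ^2 + s^8*α*γ^2 - s^10*ai - s^10*ai^2 - s^10*ai^2*gi^2 - s^10*ai^3*gi^2 - s^10*γ^2 - s^10*γ^2*ai + s^12*ai^2 + s^12*ai^3,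
        0] := by
    rw [Matrix.sub_mulVec, Matrix.smul_mulVec, Matrix.one_mulVec, hUQ]
    simp only [Matrix.cons_mulVec, Matrix.cons_dotProduct, Matrix.head_cons, Matrix.tail_cons, Matrix.dotProduct_of_isEmpty, Matrix.empty_mulVec, Matrix.smul_cons, Matrix.smul_empty, smul_eq_mul, Matrix.cons_sub_cons, Matrix.empty_sub_empty, hsi1, hsi2, hai1, hgi1, habi, habi2, mycons_eq, eq_self_iff_true, and_true]
    refine ⟨?_, ?_, ?_, ?_, ?_, ?_, ?_, ?_⟩
    · linear_combination (0:F) * hsi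
    · linear_combination (- s^10*α*gi^2 + s^10*α*γ^2*gi^2 + s^12*α*gi^2 - s^12*α*γ^2*gi^2) * hai + (s^10*α + s^10*α*γ*gi - s^12*α - s^12*α*γ*gi) * hgi
    · linear_combination (0:F) * hsi
    · linear_combination (s^8*α*gi^2 - s^8*α*γ^2*gi^2 - 2*s^10*α*gi^2 + 2*s^10*α*γ^2*gi^2 + s^12*α*gi^2 - s^12*α*γ^2*gi^2) * hai + (s^10*α + s^10*α*γ*gi - s^12*α - s^12*α*γ*gi) * hgi
    · linear_combination (- s^6 + 2*s^8 - s^8*gi^2 + s^8*γ^2 + s^8*α*gi^2 + s^8*α*γ^2 - s^8*α*γ^2*gi^2 - s^10 + s^10*gi^2 + s^10*ai*gi^2 - s^10*γ^2 - s^10*α - 2*s^10*α*gi^2 - s^10*α*γ^2 + 2*s^10*α*γ^2*gi^2 - s^12*ai + s^12*α + s^12*α*gi^2 - s^12*α*γ^2*gi^2) * hai + (- s^6*α - s^6*α*γ*gi + s^8*α + s^8*α*γ*gi + s^10*α + s^10*α*γ*gi - s^12*α - s^12*α*γ*gi) * hgi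
    · linear_combination (- s^10*α*gi^2 + s^10*α*γ^2*gi^2 + s^12*α*gi^2 - s^12*α*γ^2*gi^2) * hai + (s^10*α + s^10*α*γ*gi - s^12*α - s^12*α*γ*gi) * hgi
    · linear_combination (- s^8*α + s^8*α*gi^2 - s^8*α^3 + s^8*α^3*γ^2 - s^9*α*si + s^9*α*si*gi^2 - s^9*α^3*si + s^9*α^3*γ^2*si + s^10*α - s^10*α*gi^2 + s^10*α^3 - s^10*α^3*γ^2 + s^11*α*si - s^11*α*si*gi^2 + s^11*α^3*si - s^11*α^3*γ^2*si) * hsi + (- s^6 + 2*s^8 - s^8*gi^2 + s^8*γ^2 + s^8*α*gi^2 + s^8*α*γ^2 - s^8*α*γ^2*gi^2 - s^10 + s^10*gi^2 + s^10*ai*gi^2 - s^10*γ^2 - s^10*α - 2*s^10*α*gi^2 - s^10*α*γ^2 + 2*s^10*α*γ^2*gi^2 - s^12*ai + s^12*α + s^12*α*gi^2 - s^12*α*γ^2*gi^2) * hai + (- s^6*α - s^6*α*γ*gi + s^8*α + s^8*α*γ*gi + s^10*α + s^10*α*γ*gi - s^12*α - s^12*α*γ*gi) * hgi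
    · linear_combination (s^8*α*gi^2 - s^8*α*γ^2*gi^2 - 2*s^10*α*gi^2 + 2*s^10*α*γ^2*gi^2 + s^12*α*gi^2 - s^12*α*γ^2*gi^2) * hai + (s^10*α + s^10*α*γ*gi - s^12*α - s^12*α*γ*gi) * hgi
  have h4 : (UP - (s^2*s*γ*(α⁻¹ * γ⁻¹ ^ 2)) • (1 : Matrix (Fin 8) (Fin 8) F)) *ᵥ ![0,
        0,
        0,
        0,
        - s^6 - s^6*α + s^8 + s^8*ai + s^8*ai*gi^2 + s^8*ai^2*gi^2 + s^8*γ^2 + s^8*α*γ^2 - s^10*ai - s^10*ai^2 - s^10*ai^2*gi^2 - s^10*ai^3*gi^2 - s^10*γ^2 - s^10*γ^2*ai + s^12*ai^2 + s^12*ai^3,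
        0,
        - s^6 - s^6*α + s^8 + s^8*ai + s^8*ai*gi^2 + s^8*ai^2*gi^2 + s^8*γ^2 + s^8*α*γ^2 - s^10*ai - s^10*ai^2 - s^10*ai^2*gi^2 - s^10*ai^3*gi^2 - s^10*γ^2 - s^10*γ^2*ai + s^12*ai^2 + s^12*ai^3,
        0] =
      ![0,
        0,
        0,
        0,
        0,
        0,
        s^7*gi + s^7*ai*gi - s^9*ai*gi - s^9*ai^2*gi - s^9*ai^2*gi^3 - s^9*ai^3*gi^3 - 2*s^9*γ - s^9*γ*ai - s^9*α*γ + s^11*ai*gi + 2*s^11*ai^2*gi + s^11*ai^3*gi + s^11*ai^3*gi^3 + s^11*ai^4*gi^3 + s^11*γ + 2*s^11*γ*ai + s^11*γ*ai^2 + s^11*γ^3 + s^11*α*γ^3 - s^13*ai^2*gi - 2*s^13*ai^3*gi - s^13*ai^4*gi - s^13*γ*ai - s^13*γ*ai^2 - s^13*γ^3 - s^13*γ^3*ai + s^15*γ*ai^2 + s^15*γ*ai^3,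
        0] := by
    rw [Matrix.sub_mulVec, Matrix.smul_mulVec, Matrix.one_mulVec, hUP]
    simp only [Matrix.cons_mulVec, Matrix.cons_dotProduct, Matrix.head_cons, Matrix.tail_cons, Matrix.dotProduct_of_isEmpty, Matrix.empty_mulVec, Matrix.smul_cons, Matrix.smul_empty, smul_eq_mul, Matrix.cons_sub_cons, Matrix.empty_sub_empty, hsi1, hsi2, hai1, hgi1, habi, habi2, mycons_eq, eq_self_iff_true, and_true]
    refine ⟨?_, ?_, ?_, ?_, ?_, ?_, ?_, ?_⟩
    · linear_combination (0:F) * hsi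
    · linear_combination (0:F) * hsi
    · linear_combination (0:F) * hsi
    · linear_combination (0:F) * hsi
    · linear_combination (0:F) * hsi
    · linear_combination (0:F) * hsi
    · linear_combination (s^7*γ*gi^2 - s^9*γ^3*gi^2) * hai + (s^7*gi + s^7*ai*gi - s^9*ai*gi - s^9*ai^2*gi - s^9*ai^2*gi^3 - s^9*ai^3*gi^3 - s^9*γ - s^9*γ*ai - s^9*γ^2*gi - s^9*γ^2*ai*gi + s^11*ai*gi + 2*s^11*ai^2*gi + s^11*ai^3*gi + s^11*ai^3*gi^3 + s^11*ai^4*gi^3 + s^11*γ*ai + s^11*γ*ai^2 + s^11*γ^2*ai*gi + s^11*γ^2*ai^2*gi - s^13*ai^2*gi - 2*s^13*ai^3*gi - s^13*ai^4*gi) * hgi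
    · linear_combination (0:F) * hsi
  rw [Matrix.mul_assoc, Matrix.mul_assoc, ← Matrix.mulVec_mulVec, ← Matrix.mulVec_mulVec,
    ← Matrix.mulVec_mulVec, h1, h2, h3, h4]
  simp only [Matrix.smul_cons, Matrix.smul_empty, smul_eq_mul, hsi1, hsi2, hai1, hgi1,
    mycons_eq, eq_self_iff_true, and_true]
  refine ⟨?_, ?_, ?_, ?_, ?_, ?_, ?_, ?_⟩
  · linear_combination (0:F) * hsi
  · linear_combination (0:F) * hsi
  · linear_combination (0:F) * hsi
  · linear_combination (0:F) * hsi
  · linear_combination (0:F) * hsi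
  · linear_combination (0:F) * hsi
  · linear_combination (- α^3*si^2*ai^2*gi^2 - 2*α^3*si^2*ai^3*gi^2 - α^3*si^2*ai^4*gi^2 + α^3*si^4*ai*gi^2 + 2*α^3*si^4*ai^2*gi^2 + α^3*si^4*ai^3*gi^2 + α^3*si^4*ai^3*gi^4 + α^3*si^4*ai^4*gi^4 - α^3*si^6*ai*gi^2 - α^3*si^6*ai^2*gi^2 - α^3*si^6*ai^2*gi^4 - α^3*si^6*ai^3*gi^4 + α^3*si^8*gi^2 + α^3*si^8*ai*gi^2 + α^3*γ*ai^2*gi + α^3*γ*ai^3*gi - α^3*γ*si^2*ai*gi - α^3*γ*si^2*ai^2*gi + α^3*γ*si^4*gi + 2*α^3*γ*si^4*ai*gi + α^3*γ*si^4*ai^2*gi - 2*α^3*γ*si^6*gi - α^3*γ*si^6*ai*gi - α^3*γ^3*si^2*gi - α^3*γ^3*si^2*ai*gi + α^3*γ^3*si^4*gi - α^4*γ*si^6*gi + α^4*γ^3*si^4*gi - s*α^3*si^3*ai^2*gi^2 - 2*s*α^3*si^3*ai^3*gi^2 - s*α^3*si^3*ai^4*gi^2 + s*α^3*si^5*ai*gi^2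 + 2*s*α^3*si^5*ai^2*gi^2 + s*α^3*si^5*ai^3*gi^2 + s*α^3*si^5*ai^3*gi^4 + s*α^3*si^5*ai^4*gi^4 - s*α^3*si^7*ai*gi^2 - s*α^3*si^7*ai^2*gi^2 - s*α^3*si^7*ai^2*gi^4 - s*α^3*si^7*ai^3*gi^4 + s*α^3*si^9*gi^2 + s*α^3*si^9*ai*gi^2 + s*α^3*γ*si*ai^2*gi + s*α^3*γ*si*ai^3*gi - s*α^3*γ*si^3*ai*gi - s*α^3*γ*si^3*ai^2*gi + s*α^3*γ*si^5*gi + 2*s*α^3*γ*si^5*ai*gi + s*α^3*γ*si^5*ai^2*gi - 2*s*α^3*γ*si^7*gi - s*α^3*γ*si^7*ai*gi - s*α^3*γ^3*si^3*gi - s*α^3*γ^3*si^3*ai*gi + s*α^3*γ^3*si^5*gi - s*α^4*γ*si^7*gi + s*α^4*γ^3*si^5*gi - s^2*α^3*si^4*ai^2*gi^2 - 2*s^2*α^3*si^4*ai^3*gi^2 - s^2*α^3*si^4*ai^4*gi^2 + s^2*α^3*si^6*ai*gi^2 + 2*s^2*α^3*si^6*ai^2*gi^2 + s^2*α^3*si^6*ai^3*gi^2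 + s^2*α^3*si^6*ai^3*gi^4 + s^2*α^3*si^6*ai^4*gi^4 - s^2*α^3*si^8*ai*gi^2 - s^2*α^3*si^8*ai^2*gi^2 - s^2*α^3*si^8*ai^2*gi^4 - s^2*α^3*si^8*ai^3*gi^4 + s^2*α^3*si^10*gi^2 + s^2*α^3*si^10*ai*gi^2 + s^2*α^3*γ*si^2*ai^2*gi + s^2*α^3*γ*si^2*ai^3*gi - s^2*α^3*γ*si^4*ai*gi - s^2*α^3*γ*si^4*ai^2*gi + s^2*α^3*γ*si^6*gi + 2*s^2*α^3*γ*si^6*ai*gi + s^2*α^3*γ*si^6*ai^2*gi - 2*s^2*α^3*γ*si^8*gi - s^2*α^3*γ*si^8*ai*gi - s^2*α^3*γ^3*si^4*gi - s^2*α^3*γ^3*si^4*ai*gi + s^2*α^3*γ^3*si^6*gi - s^2*α^4*γ*si^8*gi + s^2*α^4*γ^3*si^6*gi - s^3*α^3*si^5*ai^2*gi^2 - 2*s^3*α^3*si^5*ai^3*gi^2 - s^3*α^3*si^5*ai^4*gi^2 + s^3*α^3*si^7*ai*gi^2 + 2*s^3*α^3*si^7*ai^2*gi^2 + s^3*α^3*si^7*ai^3*gi^2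 + s^3*α^3*si^7*ai^3*gi^4 + s^3*α^3*si^7*ai^4*gi^4 - s^3*α^3*si^9*ai*gi^2 - s^3*α^3*si^9*ai^2*gi^2 - s^3*α^3*si^9*ai^2*gi^4 - s^3*α^3*si^9*ai^3*gi^4 + s^3*α^3*si^11*gi^2 + s^3*α^3*si^11*ai*gi^2 + s^3*α^3*γ*si^3*ai^2*gi + s^3*α^3*γ*si^3*ai^3*gi - s^3*α^3*γ*si^5*ai*gi - s^3*α^3*γ*si^5*ai^2*gi + s^3*α^3*γ*si^7*gi + 2*s^3*α^3*γ*si^7*ai*gi + s^3*α^3*γ*si^7*ai^2*gi - 2*s^3*α^3*γ*si^9*gi - s^3*α^3*γ*si^9*ai*gi - s^3*α^3*γ^3*si^5*gi - s^3*α^3*γ^3*si^5*ai*gi + s^3*α^3*γ^3*si^7*gi - s^3*α^4*γ*si^9*gi + s^3*α^4*γ^3*si^7*gi - s^4*α^3*si^6*ai^2*gi^2 - 2*s^4*α^3*si^6*ai^3*gi^2 - s^4*α^3*si^6*ai^4*gi^2 + s^4*α^3*si^8*ai*gi^2 + 2*s^4*α^3*si^8*ai^2*gi^2 + s^4*α^3*si^8*ai^3*gi^2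 + s^4*α^3*si^8*ai^3*gi^4 + s^4*α^3*si^8*ai^4*gi^4 - s^4*α^3*si^10*ai*gi^2 - s^4*α^3*si^10*ai^2*gi^2 - s^4*α^3*si^10*ai^2*gi^4 - s^4*α^3*si^10*ai^3*gi^4 + s^4*α^3*si^12*gi^2 + s^4*α^3*si^12*ai*gi^2 + s^4*α^3*γ*si^4*ai^2*gi + s^4*α^3*γ*si^4*ai^3*gi - s^4*α^3*γ*si^6*ai*gi - s^4*α^3*γ*si^6*ai^2*gi + s^4*α^3*γ*si^8*gi + 2*s^4*α^3*γ*si^8*ai*gi + s^4*α^3*γ*si^8*ai^2*gi - 2*s^4*α^3*γ*si^10*gi - s^4*α^3*γ*si^10*ai*gi - s^4*α^3*γ^3*si^6*gi - s^4*α^3*γ^3*si^6*ai*gi + s^4*α^3*γ^3*si^8*gi - s^4*α^4*γ*si^10*gi + s^4*α^4*γ^3*si^8*gi - s^5*α^3*si^7*ai^2*gi^2 - 2*s^5*α^3*si^7*ai^3*gi^2 - s^5*α^3*si^7*ai^4*gi^2 + s^5*α^3*si^9*ai*gi^2 + 2*s^5*α^3*si^9*ai^2*gi^2 + s^5*α^3*si^9*ai^3*gi^2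 + s^5*α^3*si^9*ai^3*gi^4 + s^5*α^3*si^9*ai^4*gi^4 - s^5*α^3*si^11*ai*gi^2 - s^5*α^3*si^11*ai^2*gi^2 - s^5*α^3*si^11*ai^2*gi^4 - s^5*α^3*si^11*ai^3*gi^4 + s^5*α^3*si^13*gi^2 + s^5*α^3*si^13*ai*gi^2 + s^5*α^3*γ*si^5*ai^2*gi + s^5*α^3*γ*si^5*ai^3*gi - s^5*α^3*γ*si^7*ai*gi - s^5*α^3*γ*si^7*ai^2*gi + s^5*α^3*γ*si^9*gi + 2*s^5*α^3*γ*si^9*ai*gi + s^5*α^3*γ*si^9*ai^2*gi - 2*s^5*α^3*γ*si^11*gi - s^5*α^3*γ*si^11*ai*gi - s^5*α^3*γ^3*si^7*gi - s^5*α^3*γ^3*si^7*ai*gi + s^5*α^3*γ^3*si^9*gi - s^5*α^4*γ*si^11*gi + s^5*α^4*γ^3*si^9*gi - s^6*α^3*si^8*ai^2*gi^2 - 2*s^6*α^3*si^8*ai^3*gi^2 - s^6*α^3*si^8*ai^4*gi^2 + s^6*α^3*si^10*ai*gi^2 + 2*s^6*α^3*si^10*ai^2*gi^2 + s^6*α^3*si^10*ai^3*gi^2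 + s^6*α^3*si^10*ai^3*gi^4 + s^6*α^3*si^10*ai^4*gi^4 - s^6*α^3*si^12*ai*gi^2 - s^6*α^3*si^12*ai^2*gi^2 - s^6*α^3*si^12*ai^2*gi^4 - s^6*α^3*si^12*ai^3*gi^4 + s^6*α^3*si^14*gi^2 + s^6*α^3*si^14*ai*gi^2 + s^6*α^3*γ*si^6*ai^2*gi + s^6*α^3*γ*si^6*ai^3*gi - s^6*α^3*γ*si^8*ai*gi - s^6*α^3*γ*si^8*ai^2*gi + s^6*α^3*γ*si^10*gi + 2*s^6*α^3*γ*si^10*ai*gi + s^6*α^3*γ*si^10*ai^2*gi - 2*s^6*α^3*γ*si^12*gi - s^6*α^3*γ*si^12*ai*gi - s^6*α^3*γ^3*si^8*gi - s^6*α^3*γ^3*si^8*ai*gi + s^6*α^3*γ^3*si^10*gi - s^6*α^4*γ*si^12*gi + s^6*α^4*γ^3*si^10*gi - s^7*α^3*si^9*ai^2*gi^2 - 2*s^7*α^3*si^9*ai^3*gi^2 - s^7*α^3*si^9*ai^4*gi^2 + s^7*α^3*si^11*ai*gi^2 + 2*s^7*α^3*si^11*ai^2*gi^2 + s^7*α^3*si^11*ai^3*gi^2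 + s^7*α^3*si^11*ai^3*gi^4 + s^7*α^3*si^11*ai^4*gi^4 - s^7*α^3*si^13*ai*gi^2 - s^7*α^3*si^13*ai^2*gi^2 - s^7*α^3*si^13*ai^2*gi^4 - s^7*α^3*si^13*ai^3*gi^4 + s^7*α^3*γ*si^7*ai^2*gi + s^7*α^3*γ*si^7*ai^3*gi - s^7*α^3*γ*si^9*ai*gi - s^7*α^3*γ*si^9*ai^2*gi + s^7*α^3*γ*si^11*gi + 2*s^7*α^3*γ*si^11*ai*gi + s^7*α^3*γ*si^11*ai^2*gi - 2*s^7*α^3*γ*si^13*gi - s^7*α^3*γ*si^13*ai*gi - s^7*α^3*γ^3*si^9*gi - s^7*α^3*γ^3*si^9*ai*gi + s^7*α^3*γ^3*si^11*gi - s^7*α^4*γ*si^13*gi + s^7*α^4*γ^3*si^11*gi - s^8*α^3*si^10*ai^2*gi^2 - 2*s^8*α^3*si^10*ai^3*gi^2 - s^8*α^3*si^10*ai^4*gi^2 + s^8*α^3*si^12*ai*gi^2 + 2*s^8*α^3*si^12*ai^2*gi^2 + s^8*α^3*si^12*ai^3*gi^2 + s^8*α^3*si^12*ai^3*gi^4 +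 s^8*α^3*si^12*ai^4*gi^4 - s^8*α^3*si^14*ai*gi^2 - s^8*α^3*si^14*ai^2*gi^2 - s^8*α^3*si^14*ai^2*gi^4 - s^8*α^3*si^14*ai^3*gi^4 + s^8*α^3*γ*si^8*ai^2*gi + s^8*α^3*γ*si^8*ai^3*gi - s^8*α^3*γ*si^10*ai*gi - s^8*α^3*γ*si^10*ai^2*gi + s^8*α^3*γ*si^12*gi + 2*s^8*α^3*γ*si^12*ai*gi + s^8*α^3*γ*si^12*ai^2*gi - 2*s^8*α^3*γ*si^14*gi - s^8*α^3*γ*si^14*ai*gi - s^8*α^3*γ^3*si^10*gi - s^8*α^3*γ^3*si^10*ai*gi + s^8*α^3*γ^3*si^12*gi - s^8*α^4*γ*si^14*gi + s^8*α^4*γ^3*si^12*gi - s^9*α^3*si^11*ai^2*gi^2 - 2*s^9*α^3*si^11*ai^3*gi^2 - s^9*α^3*si^11*ai^4*gi^2 + s^9*α^3*si^13*ai*gi^2 + 2*s^9*α^3*si^13*ai^2*gi^2 + s^9*α^3*si^13*ai^3*gi^2 + s^9*α^3*si^13*ai^3*gi^4 + s^9*α^3*si^13*ai^4*gi^4 +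 s^9*α^3*γ*si^9*ai^2*gi + s^9*α^3*γ*si^9*ai^3*gi - s^9*α^3*γ*si^11*ai*gi - s^9*α^3*γ*si^11*ai^2*gi + s^9*α^3*γ*si^13*gi + 2*s^9*α^3*γ*si^13*ai*gi + s^9*α^3*γ*si^13*ai^2*gi - s^9*α^3*γ^3*si^11*gi - s^9*α^3*γ^3*si^11*ai*gi + s^9*α^3*γ^3*si^13*gi + s^9*α^4*γ^3*si^13*gi - s^10*α^3*si^12*ai^2*gi^2 - 2*s^10*α^3*si^12*ai^3*gi^2 - s^10*α^3*si^12*ai^4*gi^2 + s^10*α^3*si^14*ai*gi^2 + 2*s^10*α^3*si^14*ai^2*gi^2 + s^10*α^3*si^14*ai^3*gi^2 + s^10*α^3*si^14*ai^3*gi^4 + s^10*α^3*si^14*ai^4*gi^4 + s^10*α^3*γ*si^10*ai^2*gi + s^10*α^3*γ*si^10*ai^3*gi - s^10*α^3*γ*si^12*ai*gi - s^10*α^3*γ*si^12*ai^2*gi + s^10*α^3*γ*si^14*gi + 2*s^10*α^3*γ*si^14*ai*gi + s^10*α^3*γ*si^14*ai^2*gi - s^10*α^3*γ^3*si^12*gi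 - s^10*α^3*γ^3*si^12*ai*gi + s^10*α^3*γ^3*si^14*gi + s^10*α^4*γ^3*si^14*gi - s^11*α^3*si^13*ai^2*gi^2 - 2*s^11*α^3*si^13*ai^3*gi^2 - s^11*α^3*si^13*ai^4*gi^2 + s^11*α^3*γ*si^11*ai^2*gi + s^11*α^3*γ*si^11*ai^3*gi - s^11*α^3*γ*si^13*ai*gi - s^11*α^3*γ*si^13*ai^2*gi - s^11*α^3*γ^3*si^13*gi - s^11*α^3*γ^3*si^13*ai*gi - s^12*α^3*si^14*ai^2*gi^2 - 2*s^12*α^3*si^14*ai^3*gi^2 - s^12*α^3*si^14*ai^4*gi^2 + s^12*α^3*γ*si^12*ai^2*gi + s^12*α^3*γ*si^12*ai^3*gi - s^12*α^3*γ*si^14*ai*gi - s^12*α^3*γ*si^14*ai^2*gi - s^12*α^3*γ^3*si^14*gi - s^12*α^3*γ^3*si^14*ai*gi + s^13*α^3*γ*si^13*ai^2*gi + s^13*α^3*γ*si^13*ai^3*gi + s^14*α^3*γ*si^14*ai^2*gi + s^14*α^3*γ*si^14*ai^3*gi) * hsi + (- si^2*gi^2 - si^2*ai*gi^2 + si^4*ai*gi^4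 + γ*gi - α*si^2*gi^2 - 2*α*si^2*ai*gi^2 - α*si^2*ai^2*gi^2 + α*si^4*gi^2 + α*si^4*ai*gi^2 + α*si^4*ai*gi^4 + α*si^4*ai^2*gi^4 - α*si^6*gi^2 - α*si^6*ai*gi^4 + α*γ*gi + α*γ*ai*gi - α*γ*si^2*gi + α*γ*si^4*gi - α*γ^2*si^4*gi^2 + α*γ^2*si^6*gi^4 - α^2*si^2*ai*gi^2 - 2*α^2*si^2*ai^2*gi^2 - α^2*si^2*ai^3*gi^2 + α^2*si^4*gi^2 + 2*α^2*si^4*ai*gi^2 + α^2*si^4*ai^2*gi^2 + α^2*si^4*ai^2*gi^4 + α^2*si^4*ai^3*gi^4 - α^2*si^6*gi^2 - α^2*si^6*ai*gi^2 - α^2*si^6*ai*gi^4 - α^2*si^6*ai^2*gi^4 + α^2*si^8*gi^2 + α^2*γ*ai*gi + α^2*γ*ai^2*gi - α^2*γ*si^2*gi - α^2*γ*si^2*ai*gi + 2*α^2*γ*si^4*gi + α^2*γ*si^4*ai*gi - α^2*γ*si^6*gi - α^2*γ^2*si^4*gi^2 + α^2*γ^2*si^6*gi^2 + α^2*γ^2*si^6*gi^4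 - α^2*γ^2*si^8*gi^4 - α^2*γ^3*si^2*gi + α^3*γ^2*si^6*gi^2 - α^3*γ^2*si^8*gi^4) * hai + (1 + α - α*si^2 + α*si^6*gi^2 - α*γ*si^4*gi + α*γ*si^6*gi^3 - α^2*si^2 + α^2*si^6*gi^2 - α^2*si^8*gi^2 - 2*α^2*γ*si^4*gi + α^2*γ*si^6*gi + α^2*γ*si^6*gi^3 - α^2*γ*si^8*gi^3 - α^2*γ^2*si^2 - α^3*si^8*gi^2 - α^3*γ*si^4*gi + 2*α^3*γ*si^6*gi - α^3*γ*si^8*gi^3 - α^3*γ^2*si^2 + α^3*γ^2*si^4 + α^4*γ*si^6*gi + α^4*γ^2*si^4) * hgi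
  · linear_combination (0:F) * hsi
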